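/- Let X be a metric space and σ a doubling Borel measure on X. Let p ∈ (0,∞), λ ≥ 2 and c₁ > 0, and let B = B(x₀,r) be a ball in X such that σ(λB ∖ B) ≥ c₁ σ(B). Then there exists a constant C > 0, depending only on p, λ, c₁ and the doubling constant of σ, such that for every σ-measurable function f : X → ℝ with supp f ⊂ B and every Hajłasz gradient g ∈ D(f), one has ∫_B |f|^p dσ ≤ C r^p ∫_{λB} g^p dσ. -/

import Mathlib

open MeasureTheory Metric ENNReal

/-- `g` is a Hajłasz gradient of `f` with respect to the measure `σ`:
`g` is nonnegative, measurable, and the Hajłasz inequality holds off a `σ`-null set. -/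
def IsHajlaszGradient {X : Type} [MetricSpace X] [MeasurableSpace X]
    (σ : Measure X) (f g : X → ℝ) : Prop :=
  Measurable g ∧ (∀ x, 0 ≤ g x) ∧
    ∃ N : Set X, σ N = 0 ∧
      ∀ x, x ∉ N → ∀ y, y ∉ N → |f x - f y| ≤ dist x y * (g x + g y)

/-- Poincaré inequality for compactly supported Hajłasz–Sobolev
functions: if `σ(λB ∖ B) ≥ c₁ σ(B)` then `∫_B |f|^p dσ ≤ C r^p ∫_{λB} g^p dσ`
for every `f` supported in `B` and every Hajłasz gradient `g` of `f`, with `C`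
depending only on `p`, `λ`, `c₁` and the doubling constant of `σ`. -/
theorem stmt_0 (p lam c₁ Cσ : ℝ) (hp : 0 < p) (hlam : 2 ≤ lam) (hc₁ : 0 < c₁)
    (hCσ : 1 ≤ Cσ) :
    ∃ C : ℝ, 0 < C ∧
      ∀ (X : Type) [MetricSpace X] [MeasurableSpace X] [BorelSpace X] (σ : Measure X),
        (∀ (x : X) (r : ℝ), 0 < r → σ (ball x (2 * r)) ≤ ENNReal.ofReal Cσ * σ (ball x r)) →
        (∀ (x : X) (r : ℝ), 0 < r → 0 < σ (ball x r)) →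
        ∀ (x₀ : X) (r : ℝ), 0 < r →
          ENNReal.ofReal c₁ * σ (ball x₀ r) ≤ σ (ball x₀ (lam * r) \ ball x₀ r) →
          ∀ f g : X → ℝ, Measurable f → (∀ x, x ∉ ball x₀ r → f x = 0) →
            IsHajlaszGradient σ f g →
            ∫⁻ x in ball x₀ r, ENNReal.ofReal (|f x| ^ p) ∂σ ≤
              ENNReal.ofReal (C * r ^ p) *
                ∫⁻ x in ball x₀ (lam * r), ENNReal.ofReal (g x ^ p) ∂σ := by
  have h4lam : (0:ℝ) < 4 * lam := by linarith
  refine ⟨(4*lam)^p * (1 + 1/c₁), by positivity, ?_⟩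
  intro X _ _ _ σ _hdouble hpos x₀ r hr hAB f g _hfm hsupp hHG
  obtain ⟨hgm, hg0, N, hN, hH⟩ := hHG
  set c' : ℝ≥0∞ := ENNReal.ofReal c₁ with hc'
  have hc'0 : c' ≠ 0 := by
    simp only [hc', ne_eq, ENNReal.ofReal_eq_zero, not_le]; exact hc₁
  have hc't : c' ≠ ⊤ := ENNReal.ofReal_ne_top
  set G : X → ℝ≥0∞ := fun x => ENNReal.ofReal (g x ^ p) with hGdef
  have hGm : Measurable G := by
    apply ENNReal.measurable_ofReal.comp
    fun_prop
  set I := ∫⁻ x in ball x₀ (lam * r), G x ∂σ with hIdef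
  have hKrpos : (0:ℝ) < (4*lam*r)^p := Real.rpow_pos_of_pos (by positivity) p
  set K : ℝ≥0∞ := ENNReal.ofReal ((4*lam*r)^p) with hK
  have hK0 : K ≠ 0 := by
    simp only [hK, ne_eq, ENNReal.ofReal_eq_zero, not_le]; exact hKrpos
  have hKt : K ≠ ⊤ := ENNReal.ofReal_ne_top
  have hCrp : ENNReal.ofReal ((4*lam)^p * (1 + 1/c₁) * r^p) = K * (1 + c'⁻¹) := by
    have e1 : (4*lam)^p * (1 + 1/c₁) * r^p = (4*lam*r)^p * (1 + 1/c₁) := by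
      rw [Real.mul_rpow (by positivity) hr.le]; ring
    rw [e1, ENNReal.ofReal_mul hKrpos.le, hK,
      ENNReal.ofReal_add zero_le_one (by positivity), ENNReal.ofReal_one, one_div,
      ENNReal.ofReal_inv_of_pos hc₁]
  rw [hCrp]
  by_cases hI : I = ⊤
  · rw [hI, ENNReal.mul_top
      (mul_ne_zero hK0 (fun h => one_ne_zero (add_eq_zero.mp h).1))]
    exact le_top
  have hσB : 0 < σ (ball x₀ r) := hpos x₀ r hr
  set A := ball x₀ (lam*r) \ ball x₀ r with hAdef
  have hσA : 0 < σ A :=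
    lt_of_lt_of_le (ENNReal.mul_pos hc'0 hσB.ne') hAB
  set m := I / σ A with hm
  have hmt : m ≠ ⊤ :=
    ENNReal.mul_ne_top hI (ENNReal.inv_ne_top.2 hσA.ne')
  have hBsub : ball x₀ r ⊆ ball x₀ (lam * r) :=
    ball_subset_ball (le_mul_of_one_le_left hr.le (by linarith))
  -- existence of good points y in A
  have exy : ∀ ε : ℝ≥0∞, ε ≠ 0 → ε ≠ ⊤ → ∃ y, y ∈ A ∧ y ∉ N ∧ G y < m + ε := by
    intro ε hε hεt
    by_contra hcon
    push_neg at hcon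
    have hmε0 : m + ε ≠ 0 := by
      simp only [ne_eq, add_eq_zero, not_and_or]
      exact Or.inr hε
    have hmεt : m + ε ≠ ⊤ := ENNReal.add_ne_top.2 ⟨hmt, hεt⟩
    have hSm : MeasurableSet {y | m + ε ≤ G y} :=
      measurableSet_le measurable_const hGm
    have hsub : A ⊆ ({y | m + ε ≤ G y} ∩ A) ∪ N := by
      intro y hy
      by_cases hyN : y ∈ N
      · exact Or.inr hyN
      · exact Or.inl ⟨hcon y hy hyN, hy⟩
    have h1 : σ A ≤ σ ({y | m + ε ≤ G y} ∩ A) := by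
      calc σ A ≤ σ (({y | m + ε ≤ G y} ∩ A) ∪ N) := measure_mono hsub
        _ ≤ σ ({y | m + ε ≤ G y} ∩ A) + σ N := measure_union_le _ _
        _ = σ ({y | m + ε ≤ G y} ∩ A) := by rw [hN, add_zero]
    have h2 : σ ({y | m + ε ≤ G y} ∩ A) ≤ I / (m + ε) := by
      have hA_meas : MeasurableSet A :=
        (measurableSet_ball).diff measurableSet_ball
      have := meas_ge_le_lintegral_div (μ := σ.restrict A) hGm.aemeasurable hmε0 hmεt
      rw [Measure.restrict_apply hSm] at this
      refine this.trans ?_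
      exact ENNReal.div_le_div_right (lintegral_mono_set Set.diff_subset) _
    have h3 : I / (m + ε) < σ A := by
      rcases eq_or_ne I 0 with h0 | h0
      · rw [h0, ENNReal.zero_div]; exact hσA
      rcases eq_or_ne (σ A) ⊤ with hT | hT
      · rw [hT]; exact ENNReal.div_lt_top hI hmε0
      · rw [ENNReal.div_lt_iff (Or.inl hmε0) (Or.inl hmεt)]
        have hcancel : σ A * m = I := ENNReal.mul_div_cancel hσA.ne' hT
        calc I < I + σ A * ε :=
              ENNReal.lt_add_right hI (mul_ne_zero hσA.ne' hε)
          _ = σ A * (m + ε) := by rw [mul_add, hcancel]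
    exact (h1.trans h2).not_gt h3
  -- core pointwise estimate
  have core : ∀ x, x ∈ ball x₀ r → x ∉ N → ∀ y, y ∈ A → y ∉ N →
      ENNReal.ofReal (|f x| ^ p) ≤ K * (G x + G y) := by
    intro x hx hxN y hyA hyN
    have hfy : f y = 0 := hsupp y hyA.2
    have hgg : (0:ℝ) ≤ g x + g y := add_nonneg (hg0 x) (hg0 y)
    have h1 : |f x| ≤ (2*lam*r) * (g x + g y) := by
      have hHxy := hH x hxN y hyN
      rw [hfy, sub_zero] at hHxy
      have hd : dist x y ≤ 2*lam*r := by
        have h2 : dist x x₀ < r := mem_ball.mp hx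
        have h3 : dist y x₀ < lam * r := mem_ball.mp hyA.1
        have h4 := dist_triangle x x₀ y
        have h5 : dist x₀ y = dist y x₀ := dist_comm _ _
        nlinarith
      calc |f x| ≤ dist x y * (g x + g y) := hHxy
        _ ≤ (2*lam*r) * (g x + g y) := mul_le_mul_of_nonneg_right hd hgg
    have h2 : |f x| ^ p ≤ ((2*lam*r) * (g x + g y)) ^ p :=
      Real.rpow_le_rpow (abs_nonneg _) h1 hp.le
    have h3 : ((2*lam*r) * (g x + g y)) ^ p = (2*lam*r)^p * (g x + g y)^p :=
      Real.mul_rpow (by positivity) hgg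
    have h4 : (g x + g y)^p ≤ 2^p * (g x ^ p + g y ^ p) := by
      have hmax : g x + g y ≤ 2 * max (g x) (g y) := by
        rcases le_total (g x) (g y) with h | h
        · rw [max_eq_right h]; linarith
        · rw [max_eq_left h]; linarith
      have hmax0 : (0:ℝ) ≤ max (g x) (g y) := le_trans (hg0 x) (le_max_left _ _)
      calc (g x + g y)^p ≤ (2 * max (g x) (g y))^p :=
            Real.rpow_le_rpow hgg hmax hp.le
        _ = 2^p * (max (g x) (g y))^p := Real.mul_rpow (by norm_num) hmax0
        _ ≤ 2^p * (g x ^ p + g y ^ p) := by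
            apply mul_le_mul_of_nonneg_left _ (Real.rpow_nonneg (by norm_num) p)
            rcases max_cases (g x) (g y) with ⟨h, _⟩ | ⟨h, _⟩ <;> rw [h]
            · linarith [Real.rpow_nonneg (hg0 y) p]
            · linarith [Real.rpow_nonneg (hg0 x) p]
    have h5 : (2*lam*r)^p * 2^p = (4*lam*r)^p := by
      rw [← Real.mul_rpow (by positivity) (by norm_num)]
      ring_nf
    have h6 : |f x| ^ p ≤ (4*lam*r)^p * (g x ^ p + g y ^ p) := by
      calc |f x| ^ p ≤ (2*lam*r)^p * (g x + g y)^p := h2.trans_eq h3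
        _ ≤ (2*lam*r)^p * (2^p * (g x ^ p + g y ^ p)) :=
            mul_le_mul_of_nonneg_left h4 (Real.rpow_nonneg (by positivity) p)
        _ = (4*lam*r)^p * (g x ^ p + g y ^ p) := by rw [← mul_assoc, h5]
    calc ENNReal.ofReal (|f x| ^ p) ≤
        ENNReal.ofReal ((4*lam*r)^p * (g x ^ p + g y ^ p)) :=
          ENNReal.ofReal_le_ofReal h6
      _ = K * (G x + G y) := by
          rw [ENNReal.ofReal_mul hKrpos.le,
            ENNReal.ofReal_add (Real.rpow_nonneg (hg0 x) p) (Real.rpow_nonneg (hg0 y) p)]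
  -- pointwise bound involving m
  have ptwise : ∀ x, x ∈ ball x₀ r → x ∉ N →
      ENNReal.ofReal (|f x| ^ p) ≤ K * (G x + m) := by
    intro x hx hxN
    apply ENNReal.le_of_forall_pos_le_add
    intro ε hε _
    have hεne : (ε : ℝ≥0∞) ≠ 0 := by
      simpa using hε.ne'
    have hδ0 : (ε : ℝ≥0∞) / K ≠ 0 := by
      simp only [ne_eq, ENNReal.div_eq_zero_iff, not_or]
      exact ⟨hεne, hKt⟩
    have hδt : (ε : ℝ≥0∞) / K ≠ ⊤ :=
      (ENNReal.div_lt_top ENNReal.coe_ne_top hK0).ne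
    obtain ⟨y, hyA, hyN, hy⟩ := exy ((ε : ℝ≥0∞) / K) hδ0 hδt
    calc ENNReal.ofReal (|f x| ^ p) ≤ K * (G x + G y) := core x hx hxN y hyA hyN
      _ ≤ K * (G x + (m + (ε : ℝ≥0∞) / K)) := by
          gcongr
      _ = K * (G x + m) + K * ((ε : ℝ≥0∞) / K) := by ring
      _ = K * (G x + m) + ε := by
          rw [mul_comm K ((ε : ℝ≥0∞) / K), ENNReal.div_mul_cancel hK0 hKt]
  -- integrate
  have hNae : ∀ᵐ x ∂(σ.restrict (ball x₀ r)), x ∉ N := by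
    apply ae_restrict_of_ae
    rw [ae_iff]
    simpa [not_not] using hN
  have hball : ∀ᵐ x ∂(σ.restrict (ball x₀ r)), x ∈ ball x₀ r :=
    ae_restrict_mem measurableSet_ball
  have hae : ∀ᵐ x ∂(σ.restrict (ball x₀ r)),
      ENNReal.ofReal (|f x| ^ p) ≤ K * (G x + m) := by
    filter_upwards [hNae, hball] with x hxN hx
    exact ptwise x hx hxN
  have hdm : I / σ A * σ A ≤ I := by
    rcases eq_or_ne (σ A) ⊤ with hT | hT
    · rw [hT, ENNReal.div_top, zero_mul]; exact zero_le
    · rw [ENNReal.div_mul_cancel hσA.ne' hT]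
  have hσBA : σ (ball x₀ r) ≤ σ A / c' := by
    rw [ENNReal.le_div_iff_mul_le (Or.inl hc'0) (Or.inl hc't), mul_comm]
    exact hAB
  calc ∫⁻ x in ball x₀ r, ENNReal.ofReal (|f x| ^ p) ∂σ
      ≤ ∫⁻ x in ball x₀ r, K * (G x + m) ∂σ := lintegral_mono_ae hae
    _ = K * ((∫⁻ x in ball x₀ r, G x ∂σ) + m * σ (ball x₀ r)) := by
        rw [lintegral_const_mul _ (f := fun x => G x + m) (hGm.add measurable_const),
          lintegral_add_right _ measurable_const, lintegral_const,
          Measure.restrict_apply_univ]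
    _ ≤ K * (I + I * c'⁻¹) := by
        refine mul_le_mul_right (add_le_add (lintegral_mono_set hBsub) ?_) K
        calc m * σ (ball x₀ r) ≤ (I / σ A) * (σ A / c') :=
              mul_le_mul_right hσBA m
          _ = (I / σ A * σ A) * c'⁻¹ := by
              simp only [div_eq_mul_inv]; ring
          _ ≤ I * c'⁻¹ := mul_le_mul_left hdm _
    _ = K * (1 + c'⁻¹) * I := by ring
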